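/- For every natural number n and every k with 2k + 1 ≥ n and k + 1 ≤ n, the up operator U maps V(B(n)_k) surjectively onto V(B(n)_{k+1}). -/

import Mathlib

/-- `V n` is the complex vector space with basis `B(n)`, the set of all
subsets of `[n] = {1, …, n}` (modeled as `Finset (Fin n)`). -/
abbrev V (n : ℕ) : Type := Finset (Fin n) →₀ ℂ

/-- `V(B(n)_k)`: the span of the `k`-subsets of `[n]`, i.e. the elements of
`V n` supported on subsets of cardinality `k`. -/
noncomputable def rankSubmodule (n k : ℕ) : Submodule ℂ (V n) :=
  Finsupp.supported ℂ ℂ {X : Finset (Fin n) | X.card = k}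

/-- The up operator `U : V(B(n)) → V(B(n))`, defined on a basis element `X` by
`U(X) = Σ_Y Y`, the sum over all `Y ⊆ [n]` with `X ⊆ Y` and `|Y| = |X| + 1`. -/
noncomputable def upMap (n : ℕ) : V n →ₗ[ℂ] V n :=
  Finsupp.lift (V n) ℂ (Finset (Fin n)) fun X =>
    ∑ Y ∈ Finset.univ.filter (fun Y : Finset (Fin n) => X ⊆ Y ∧ Y.card = X.card + 1),
      Finsupp.single Y (1 : ℂ)

/-- `IsSJC n k h v` : `(v 0, v 1, …, v (h-1))` is a symmetric Jordan chain in
`V(B(n))`: a sequence of `h ≥ 1` nonzero homogeneous elements, `v i` of rank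
`k + i`, with `U (v i) = v (i+1)`, `U (v (h-1)) = 0`, and the symmetry condition
`r(v_1) + r(v_h) = n` (which for `h = 1` reads `2 r(v_1) = n`). -/
def IsSJC (n k h : ℕ) (v : ℕ → V n) : Prop :=
  1 ≤ h ∧
  (∀ i < h, v i ≠ 0 ∧ v i ∈ rankSubmodule n (k + i)) ∧
  (∀ i, i + 1 < h → upMap n (v i) = v (i + 1)) ∧
  upMap n (v (h - 1)) = 0 ∧
  k + (k + (h - 1)) = n

/-- The inclusion `V(B(n)) ≃ V(0) ⊆ V(B(n+1))` induced by regarding a subset of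
`[n]` as a subset of `[n+1]` not containing `n+1`. -/
noncomputable def inclMap (n : ℕ) : V n →ₗ[ℂ] V (n + 1) :=
  Finsupp.lmapDomain ℂ ℂ (fun X : Finset (Fin n) =>
    X.map ⟨Fin.castSucc, Fin.castSucc_injective n⟩)

/-- The map `R : V(0) → V(B(n+1))`, `R(v) = v̄`, induced by
`X ↦ X ∪ {n+1}` for `X ⊆ [n]` (here `V(0) ≅ V(B(n))`). -/
noncomputable def barMap (n : ℕ) : V n →ₗ[ℂ] V (n + 1) :=
  Finsupp.lmapDomain ℂ ℂ (fun X : Finset (Fin n) =>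
    insert (Fin.last n) (X.map ⟨Fin.castSucc, Fin.castSucc_injective n⟩))

open Finset

namespace UpperHalf

variable {n : ℕ}

/-- The down operator. -/
noncomputable def downMap (n : ℕ) : V n →ₗ[ℂ] V n :=
  Finsupp.lift (V n) ℂ (Finset (Fin n)) fun Y =>
    ∑ X ∈ Finset.univ.filter (fun X : Finset (Fin n) => X ⊆ Y ∧ Y.card = X.card + 1),
      Finsupp.single X (1 : ℂ)

/-- Adjacency matrix of the covering relation. -/
def aMat (X Y : Finset (Fin n)) : ℂ := if X ⊆ Y ∧ Y.card = X.card + 1 then 1 else 0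

lemma lift_apply_coeff (g : Finset (Fin n) → V n) (f : V n) (Z : Finset (Fin n)) :
    (Finsupp.lift (V n) ℂ (Finset (Fin n)) g f) Z = ∑ X : Finset (Fin n), f X * g X Z := by
  rw [Finsupp.lift_apply, Finsupp.sum_apply]
  rw [Finsupp.sum_fintype]
  · simp [Finsupp.smul_apply, smul_eq_mul]
  · intro X; simp

lemma sum_single_filter_apply (P : Finset (Fin n) → Prop) [DecidablePred P]
    (Z : Finset (Fin n)) :
    (∑ Y ∈ Finset.univ.filter (fun Y => P Y), Finsupp.single Y (1 : ℂ)) Z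
      = if P Z then 1 else 0 := by
  rw [Finset.sum_apply']
  simp only [Finsupp.single_apply]
  rw [Finset.sum_ite_eq' (Finset.univ.filter fun Y => P Y) Z (fun _ => (1:ℂ))]
  simp

lemma upMap_coeff (f : V n) (Y : Finset (Fin n)) :
    upMap n f Y = ∑ X : Finset (Fin n), aMat X Y * f X := by
  rw [upMap, lift_apply_coeff]
  refine Finset.sum_congr rfl fun X _ => ?_
  rw [sum_single_filter_apply (fun Y' => X ⊆ Y' ∧ Y'.card = X.card + 1) Y]
  rw [aMat, mul_comm]

lemma downMap_coeff (f : V n) (X : Finset (Fin n)) :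
    downMap n f X = ∑ Y : Finset (Fin n), aMat X Y * f Y := by
  rw [downMap, lift_apply_coeff]
  refine Finset.sum_congr rfl fun Y _ => ?_
  rw [sum_single_filter_apply (fun X' => X' ⊆ Y ∧ Y.card = X'.card + 1) X]
  rw [aMat, mul_comm]

lemma up_mem {m : ℕ} {f : V n} (hf : f ∈ rankSubmodule n m) :
    upMap n f ∈ rankSubmodule n (m + 1) := by
  rw [rankSubmodule, Finsupp.mem_supported] at *
  intro Y hY
  rw [Finset.mem_coe, Finsupp.mem_support_iff, upMap_coeff] at hY
  obtain ⟨X, -, hX⟩ := Finset.exists_ne_zero_of_sum_ne_zero hY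
  have ha : aMat X Y ≠ 0 := fun h => hX (by simp [h])
  have hfX : f X ≠ 0 := fun h => hX (by simp [h])
  rw [aMat, ne_eq, ite_eq_right_iff, not_forall] at ha
  obtain ⟨⟨-, hc⟩, -⟩ := ha
  have : X ∈ {X : Finset (Fin n) | X.card = m} := hf (Finsupp.mem_support_iff.2 hfX)
  simp only [Set.mem_setOf_eq] at this ⊢
  omega

lemma down_mem {m : ℕ} {f : V n} (hf : f ∈ rankSubmodule n (m + 1)) :
    downMap n f ∈ rankSubmodule n m := by
  rw [rankSubmodule, Finsupp.mem_supported] at *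
  intro X hX
  rw [Finset.mem_coe, Finsupp.mem_support_iff, downMap_coeff] at hX
  obtain ⟨Y, -, hY⟩ := Finset.exists_ne_zero_of_sum_ne_zero hX
  have ha : aMat X Y ≠ 0 := fun h => hY (by simp [h])
  have hfY : f Y ≠ 0 := fun h => hY (by simp [h])
  rw [aMat, ne_eq, ite_eq_right_iff, not_forall] at ha
  obtain ⟨⟨-, hc⟩, -⟩ := ha
  have : Y ∈ {X : Finset (Fin n) | X.card = m + 1} := hf (Finsupp.mem_support_iff.2 hfY)
  simp only [Set.mem_setOf_eq] at this ⊢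
  omega

lemma filter_covers (X : Finset (Fin n)) :
    Finset.univ.filter (fun Y : Finset (Fin n) => X ⊆ Y ∧ Y.card = X.card + 1)
      = Xᶜ.image (fun a => insert a X) := by
  ext Y
  simp only [Finset.mem_filter, Finset.mem_univ, true_and, Finset.mem_image, Finset.mem_compl]
  constructor
  · rintro ⟨hXY, hc⟩
    have hd : (Y \ X).card = 1 := by rw [Finset.card_sdiff_of_subset hXY]; omega
    obtain ⟨a, ha⟩ := Finset.card_eq_one.1 hd
    have haX : a ∉ X := by
      have : a ∈ Y \ X := ha ▸ Finset.mem_singleton_self a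
      exact (Finset.mem_sdiff.1 this).2
    refine ⟨a, haX, ?_⟩
    rw [← Finset.union_sdiff_of_subset hXY, ha, Finset.union_comm]
    simp [Finset.insert_eq, -Finset.singleton_union]
  · rintro ⟨a, ha, rfl⟩
    exact ⟨Finset.subset_insert a X, Finset.card_insert_of_notMem ha⟩

lemma filter_covered (Y : Finset (Fin n)) :
    Finset.univ.filter (fun X : Finset (Fin n) => X ⊆ Y ∧ Y.card = X.card + 1)
      = Y.image (fun b => Y.erase b) := by
  ext X
  simp only [Finset.mem_filter, Finset.mem_univ, true_and, Finset.mem_image]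
  constructor
  · rintro ⟨hXY, hc⟩
    have hd : (Y \ X).card = 1 := by rw [Finset.card_sdiff_of_subset hXY]; omega
    obtain ⟨b, hb⟩ := Finset.card_eq_one.1 hd
    have hbY : b ∈ Y := by
      have : b ∈ Y \ X := hb ▸ Finset.mem_singleton_self b
      exact (Finset.mem_sdiff.1 this).1
    refine ⟨b, hbY, ?_⟩
    rw [Finset.erase_eq, ← hb, Finset.sdiff_sdiff_self_left]
    exact Finset.inter_eq_right.2 hXY
  · rintro ⟨b, hb, rfl⟩
    have hpos : 0 < Y.card := Finset.card_pos.2 ⟨b, hb⟩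
    exact ⟨Finset.erase_subset b Y, by rw [Finset.card_erase_of_mem hb]; omega⟩

lemma upMap_single (X : Finset (Fin n)) :
    upMap n (Finsupp.single X 1) = ∑ a ∈ Xᶜ, Finsupp.single (insert a X) (1 : ℂ) := by
  rw [upMap, Finsupp.lift_apply, Finsupp.sum_single_index (by simp), one_smul, filter_covers]
  rw [Finset.sum_image]
  intro a ha b hb h
  have : a ∈ insert b X := (show insert a X = insert b X from h) ▸ Finset.mem_insert_self a X
  rcases Finset.mem_insert.1 this with h' | h'
  · exact h'
  · exact absurd h' (Finset.mem_compl.1 ha)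

lemma downMap_single (Y : Finset (Fin n)) :
    downMap n (Finsupp.single Y 1) = ∑ b ∈ Y, Finsupp.single (Y.erase b) (1 : ℂ) := by
  rw [downMap, Finsupp.lift_apply, Finsupp.sum_single_index (by simp), one_smul, filter_covered]
  rw [Finset.sum_image]
  intro a ha b hb h
  by_contra hab
  have : a ∉ Y.erase a := Finset.notMem_erase a Y
  rw [show Y.erase a = Y.erase b from h] at this
  exact this (Finset.mem_erase.2 ⟨hab, ha⟩)

set_option maxHeartbeats 1000000 in
/-- The commutator relation on basis vectors. -/
lemma comm_single (X : Finset (Fin n)) :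
    downMap n (upMap n (Finsupp.single X 1)) + X.card • Finsupp.single X (1:ℂ)
      = upMap n (downMap n (Finsupp.single X 1)) + Xᶜ.card • Finsupp.single X (1:ℂ) := by
  rw [upMap_single, downMap_single, map_sum, map_sum]
  have hDU : ∀ a ∈ Xᶜ, downMap n (Finsupp.single (insert a X) (1:ℂ))
      = Finsupp.single X (1:ℂ) + ∑ b ∈ X, Finsupp.single (insert a (X.erase b)) (1:ℂ) := by
    intro a ha
    rw [downMap_single, Finset.sum_insert (Finset.mem_compl.1 ha),
      Finset.erase_insert (Finset.mem_compl.1 ha)]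
    congr 1
    refine Finset.sum_congr rfl fun b hb => ?_
    rw [Finset.erase_insert_of_ne]
    intro h; exact Finset.mem_compl.1 ha (h ▸ hb)
  have hUD : ∀ b ∈ X, upMap n (Finsupp.single (X.erase b) (1:ℂ))
      = Finsupp.single X (1:ℂ) + ∑ a ∈ Xᶜ, Finsupp.single (insert a (X.erase b)) (1:ℂ) := by
    intro b hb
    rw [upMap_single, Finset.compl_erase, Finset.sum_insert (by simp only [Finset.mem_compl, not_not]; exact hb : b ∉ Xᶜ),
      Finset.insert_erase hb]
  rw [Finset.sum_congr rfl hDU, Finset.sum_congr rfl hUD,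
    Finset.sum_add_distrib, Finset.sum_add_distrib, Finset.sum_const, Finset.sum_const,
    Finset.sum_comm]
  abel

/-- The commutator relation on the rank-`m` subspace. -/
lemma comm_rank (m : ℕ) (f : V n) (hf : f ∈ rankSubmodule n m) :
    downMap n (upMap n f) + m • f = upMap n (downMap n f) + (n - m) • f := by
  suffices H : ∀ (U D : V n →ₗ[ℂ] V n),
      (∀ X : Finset (Fin n), D (U (Finsupp.single X 1)) + X.card • Finsupp.single X (1:ℂ)
        = U (D (Finsupp.single X 1)) + Xᶜ.card • Finsupp.single X (1:ℂ)) →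
      D (U f) + m • f = U (D f) + (n - m) • f by
    exact H (upMap n) (downMap n) comm_single
  intro U D hcsingle
  have hspan : f ∈ Submodule.span ℂ ((fun X => Finsupp.single X (1:ℂ)) ''
      {X : Finset (Fin n) | X.card = m}) := by
    rwa [← Finsupp.supported_eq_span_single]
  clear hf
  induction hspan using Submodule.span_induction with
  | mem x hx =>
      obtain ⟨X, hX, rfl⟩ := hx
      have h1 : X.card = m := hX
      have h2 : Xᶜ.card = n - m := by
        rw [Finset.card_compl, h1]; simp
      have hcs := hcsingle X
      rw [h1, h2] at hcs
      exact hcs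
  | zero => simp
  | add x y hx hy ihx ihy =>
      have := congrArg₂ (· + ·) ihx ihy
      simp only [map_add, smul_add] at this ⊢
      convert this using 1 <;> abel
  | smul c x hx ih =>
      have := congrArg (c • ·) ih
      simp only [map_smul, smul_add, smul_comm c] at this ⊢
      exact this

/-- Standard hermitian pairing. -/
noncomputable def pair (f g : V n) : ℂ :=
  ∑ X : Finset (Fin n), (starRingEnd ℂ) (f X) * g X

lemma pair_add_right (f g h : V n) : pair f (g + h) = pair f g + pair f h := by
  simp [pair, mul_add, Finset.sum_add_distrib]

lemma pair_nsmul_right (f g : V n) (m : ℕ) : pair f (m • g) = m * pair f g := by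
  simp [pair, Finset.mul_sum, mul_left_comm]

lemma aMat_real (X Y : Finset (Fin n)) : (starRingEnd ℂ) (aMat X Y) = aMat X Y := by
  rw [aMat]; split <;> simp

lemma pair_up_left (f g : V n) : pair (upMap n f) g = pair f (downMap n g) := by
  simp only [pair, upMap_coeff, downMap_coeff, map_sum, map_mul, aMat_real,
    Finset.sum_mul, Finset.mul_sum]
  rw [Finset.sum_comm]
  refine Finset.sum_congr rfl fun X _ => Finset.sum_congr rfl fun Y _ => by ring

lemma pair_down_left (f g : V n) : pair (downMap n f) g = pair f (upMap n g) := by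
  simp only [pair, upMap_coeff, downMap_coeff, map_sum, map_mul, aMat_real,
    Finset.sum_mul, Finset.mul_sum]
  rw [Finset.sum_comm]
  refine Finset.sum_congr rfl fun X _ => Finset.sum_congr rfl fun Y _ => by ring

lemma pair_self (f : V n) : pair f f = ((∑ X : Finset (Fin n), Complex.normSq (f X) : ℝ) : ℂ) := by
  rw [pair]
  push_cast
  refine Finset.sum_congr rfl fun X _ => ?_
  rw [Complex.normSq_eq_conj_mul_self]

lemma pair_self_nonneg_real (f : V n) : 0 ≤ ∑ X : Finset (Fin n), Complex.normSq (f X) :=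
  Finset.sum_nonneg fun X _ => Complex.normSq_nonneg _

lemma pair_self_eq_zero (f : V n) (h : ∑ X : Finset (Fin n), Complex.normSq (f X) = 0) :
    f = 0 := by
  ext X
  have := (Finset.sum_eq_zero_iff_of_nonneg (fun X _ => Complex.normSq_nonneg (f X))).1 h
    X (Finset.mem_univ X)
  simpa using Complex.normSq_eq_zero.1 this

lemma norm_identity (m : ℕ) (f : V n) (hf : f ∈ rankSubmodule n m) :
    (∑ X : Finset (Fin n), Complex.normSq (upMap n f X))
        + m * ∑ X : Finset (Fin n), Complex.normSq (f X)
      = (∑ X : Finset (Fin n), Complex.normSq (downMap n f X))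
        + (n - m : ℕ) * ∑ X : Finset (Fin n), Complex.normSq (f X) := by
  have h := congrArg (pair f) (comm_rank m f hf)
  rw [pair_add_right, pair_add_right, pair_nsmul_right, pair_nsmul_right,
    show pair f (downMap n (upMap n f)) = pair (upMap n f) (upMap n f) from
      (pair_up_left _ _).symm,
    show pair f (upMap n (downMap n f)) = pair (downMap n f) (downMap n f) from
      (pair_down_left _ _).symm,
    pair_self, pair_self, pair_self] at h
  exact_mod_cast h

instance : FiniteDimensional ℂ (V n) :=
  Module.Finite.equiv (Finsupp.linearEquivFunOnFinite ℂ ℂ (Finset (Fin n))).symm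

end UpperHalf

/-- **Theorem.** For every `n` and every `k` with `2k + 1 ≥ n` and `k + 1 ≤ n`, the up
operator `U` maps `V(B(n)_k)` surjectively onto `V(B(n)_{k+1})`. -/
theorem upMap_surjOn_upper_half (n k : ℕ) (h1 : n ≤ 2 * k + 1) (h2 : k + 1 ≤ n) :
    ∀ w ∈ rankSubmodule n (k + 1), ∃ v ∈ rankSubmodule n k, upMap n v = w := by
  classical
  open UpperHalf in
  intro w hw
  have hmap : ∀ x ∈ rankSubmodule n (k + 1),
      ((upMap n).comp (downMap n)) x ∈ rankSubmodule n (k + 1) := fun x hx =>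
    up_mem (down_mem hx)
  let T : rankSubmodule n (k + 1) →ₗ[ℂ] rankSubmodule n (k + 1) :=
    LinearMap.restrict _ hmap
  have hinj : Function.Injective T := by
    rw [injective_iff_map_eq_zero]
    intro v hv
    have hval : upMap n (downMap n v.val) = 0 := by
      have := congrArg Subtype.val hv
      simpa [T, LinearMap.restrict_apply] using this
    -- pair with v to get N (D v) = 0
    have h0 : (∑ X : Finset (Fin n), Complex.normSq (downMap n v.val X)) = 0 := by
      have h1 : pair v.val (upMap n (downMap n v.val)) = 0 := by
        rw [hval]; simp [pair]
      rw [← pair_down_left, pair_self] at h1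
      exact_mod_cast h1
    have hid := norm_identity (k + 1) v.val v.2
    rw [h0] at hid
    set Nu := ∑ X : Finset (Fin n), Complex.normSq (upMap n v.val X) with hNu
    set Nv := ∑ X : Finset (Fin n), Complex.normSq (v.val X) with hNv
    have hNu0 : 0 ≤ Nu := Finset.sum_nonneg fun X _ => Complex.normSq_nonneg _
    have hNv0 : 0 ≤ Nv := Finset.sum_nonneg fun X _ => Complex.normSq_nonneg _
    have hle : ((n - (k + 1) : ℕ) : ℝ) ≤ (k : ℝ) := by
      have : n - (k + 1) ≤ k := by omega
      exact_mod_cast this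
    have hmul := mul_le_mul_of_nonneg_right hle hNv0
    have hNvz : Nv = 0 := by push_cast at hid; linarith
    have : v.val = 0 := pair_self_eq_zero v.val (hNv ▸ hNvz)
    exact Subtype.ext this
  have hsurj : Function.Surjective T := (LinearMap.injective_iff_surjective (K := ℂ) (V := rankSubmodule n (k + 1)) (f := T)).1 hinj
  obtain ⟨v', hv'⟩ := hsurj ⟨w, hw⟩
  refine ⟨downMap n v'.val, down_mem v'.2, ?_⟩
  have := congrArg Subtype.val hv'
  simpa [T, LinearMap.restrict_apply] using this
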